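/- Let 𝔙 be a regular vessel. Then for every n ≥ 0, the moments of 𝔙 satisfy on Ω the evolution equation ∂_t H_n = i ∂_x H_{n+1} + i (∂_x H_0) σ1 H_n. -/

import Mathlib

noncomputable section

open ContinuousLinearMap

/-- The coefficient space `ℂ^d`. -/
abbrev Ed (d : ℕ) : Type := EuclideanSpace ℂ (Fin d)

/-- A `d × d` complex matrix viewed as a continuous linear map on `ℂ^d`. -/
def m2c {d : ℕ} (σ : Matrix (Fin d) (Fin d) ℂ) : Ed d →L[ℂ] Ed d :=
  Matrix.toEuclideanCLM (𝕜 := ℂ) σ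

/-- A continuous linear map on `ℂ^d` viewed as a `d × d` complex matrix. -/
def c2m {d : ℕ} (T : Ed d →L[ℂ] Ed d) : Matrix (Fin d) (Fin d) ℂ :=
  (Matrix.toEuclideanCLM (𝕜 := ℂ)).symm T

/-- Partial derivative in the first (space) variable. -/
def pdx {M : Type*} [NormedAddCommGroup M] [NormedSpace ℝ M]
    (F : ℝ × ℝ → M) (p : ℝ × ℝ) : M :=
  deriv (fun x => F (x, p.2)) p.1

/-- Partial derivative in the second (time) variable. -/
def pdt {M : Type*} [NormedAddCommGroup M] [NormedSpace ℝ M]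
    (F : ℝ × ℝ → M) (p : ℝ × ℝ) : M :=
  deriv (fun t => F (p.1, t)) p.2

/-- Entrywise partial derivative in `x` of a matrix-valued function. -/
def pdxM {d : ℕ} (F : ℝ × ℝ → Matrix (Fin d) (Fin d) ℂ) (p : ℝ × ℝ) :
    Matrix (Fin d) (Fin d) ℂ :=
  Matrix.of fun i j => pdx (fun q => F q i j) p

/-- Entrywise partial derivative in `t` of a matrix-valued function. -/
def pdtM {d : ℕ} (F : ℝ × ℝ → Matrix (Fin d) (Fin d) ℂ) (p : ℝ × ℝ) :
    Matrix (Fin d) (Fin d) ℂ :=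
  Matrix.of fun i j => pdt (fun q => F q i j) p

/-- A regular vessel with inner (Krein/Hilbert) space `K` and coefficient space `ℂ^d`. -/
structure Vessel (K : Type*) [NormedAddCommGroup K] [InnerProductSpace ℂ K]
    [CompleteSpace K] (d : ℕ) where
  Ω : Set (ℝ × ℝ)
  hΩ : IsOpen Ω
  A : K →L[ℂ] K
  Aζ : K →L[ℂ] K
  B : ℝ × ℝ → Ed d →L[ℂ] K
  C : ℝ × ℝ → K →L[ℂ] Ed d
  X : ℝ × ℝ → K →L[ℂ] K
  /-- pointwise inverse of `X` -/
  Xi : ℝ × ℝ → K →L[ℂ] K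
  σ1 : Matrix (Fin d) (Fin d) ℂ
  σ2 : Matrix (Fin d) (Fin d) ℂ
  γ : Matrix (Fin d) (Fin d) ℂ
  γs : ℝ × ℝ → Matrix (Fin d) (Fin d) ℂ
  hσ1 : IsUnit σ1
  smoothB : ContDiffOn ℝ 2 B Ω
  smoothC : ContDiffOn ℝ 2 C Ω
  smoothX : ContDiffOn ℝ 2 X Ω
  hXinv : ∀ p ∈ Ω, X p ∘L Xi p = (1 : K →L[ℂ] K) ∧ Xi p ∘L X p = (1 : K →L[ℂ] K)
  eqBx : ∀ p ∈ Ω,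
    pdx B p ∘L m2c σ1 + A ∘L B p ∘L m2c σ2 + B p ∘L m2c γ = 0
  eqBt : ∀ p ∈ Ω, pdt B p = Complex.I • (A ∘L pdx B p)
  eqCx : ∀ p ∈ Ω,
    m2c σ1 ∘L pdx C p + m2c σ2 ∘L C p ∘L Aζ - m2c γ ∘L C p = 0
  eqCt : ∀ p ∈ Ω, pdt C p = (-Complex.I) • (pdx C p ∘L Aζ)
  eqXx : ∀ p ∈ Ω, pdx X p = B p ∘L m2c σ2 ∘L C p
  eqXt : ∀ p ∈ Ω, pdt X p =
    Complex.I • (A ∘L B p ∘L m2c σ2 ∘L C p) -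
      Complex.I • (B p ∘L m2c σ2 ∘L C p ∘L Aζ) +
      Complex.I • (B p ∘L m2c γ ∘L C p)
  eqLyap : ∀ p ∈ Ω, A ∘L X p + X p ∘L Aζ + B p ∘L m2c σ1 ∘L C p = 0
  eqLink : ∀ p ∈ Ω, γs p =
    γ + σ2 * c2m (C p ∘L Xi p ∘L B p) * σ1 - σ1 * c2m (C p ∘L Xi p ∘L B p) * σ2

/-- The `n`-th moment `H_n = C 𝕏⁻¹ Aⁿ B` of a vessel, as a `d × d` matrix. -/
def Vessel.H {K : Type*} [NormedAddCommGroup K] [InnerProductSpace ℂ K]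
    [CompleteSpace K] {d : ℕ} (V : Vessel K d) (n : ℕ) (p : ℝ × ℝ) :
    Matrix (Fin d) (Fin d) ℂ :=
  c2m (V.C p ∘L V.Xi p ∘L (V.A ^ n) ∘L V.B p)

/- ### Auxiliary lemmas -/

lemma c2m_comp {d : ℕ} (S T : Ed d →L[ℂ] Ed d) : c2m (S ∘L T) = c2m S * c2m T := by
  simp [c2m, ← ContinuousLinearMap.mul_def, map_mul]

lemma c2m_smul {d : ℕ} (a : ℂ) (T : Ed d →L[ℂ] Ed d) : c2m (a • T) = a • c2m T := by
  simp [c2m]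

lemma c2m_add {d : ℕ} (S T : Ed d →L[ℂ] Ed d) : c2m (S + T) = c2m S + c2m T := by
  simp [c2m]

lemma c2m_m2c {d : ℕ} (σ : Matrix (Fin d) (Fin d) ℂ) : c2m (m2c σ) = σ := by
  simp [c2m, m2c]

/-- Matrix entry of `c2m`, as an `ℝ`-linear map. -/
def entryL {d : ℕ} (i j : Fin d) : (Ed d →L[ℂ] Ed d) →ₗ[ℝ] ℂ where
  toFun T := c2m T i j
  map_add' S T := by simp [c2m_add]
  map_smul' r T := by
    rw [show r • T = (r : ℂ) • T from by ext v; simp [Complex.real_smul]]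
    simp [c2m_smul, Matrix.smul_apply]

lemma entryL_hasDerivAt {d : ℕ} {f : ℝ → Ed d →L[ℂ] Ed d} {f' : Ed d →L[ℂ] Ed d} {t : ℝ}
    (h : HasDerivAt f f' t) (i j : Fin d) :
    HasDerivAt (fun s => c2m (f s) i j) (c2m f' i j) t := by
  have := ((entryL i j).toContinuousLinearMap.hasFDerivAt (x := f t)).comp_hasDerivAt t h
  simp [Function.comp, entryL] at this
  exact this

lemma pdtM_c2m {d : ℕ} {F : ℝ × ℝ → Ed d →L[ℂ] Ed d} {p : ℝ × ℝ} {Ft : Ed d →L[ℂ] Ed d}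
    (h : HasDerivAt (fun t => F (p.1, t)) Ft p.2) :
    pdtM (fun q => c2m (F q)) p = c2m Ft := by
  ext i j
  simpa [pdtM, pdt] using (entryL_hasDerivAt h i j).deriv

lemma pdxM_c2m {d : ℕ} {F : ℝ × ℝ → Ed d →L[ℂ] Ed d} {p : ℝ × ℝ} {Fx : Ed d →L[ℂ] Ed d}
    (h : HasDerivAt (fun x => F (x, p.2)) Fx p.1) :
    pdxM (fun q => c2m (F q)) p = c2m Fx := by
  ext i j
  simpa [pdxM, pdx] using (entryL_hasDerivAt h i j).deriv

lemma sliceX {E : Type*} [NormedAddCommGroup E] [NormedSpace ℝ E] {F : ℝ × ℝ → E}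
    {p : ℝ × ℝ} (h : DifferentiableAt ℝ F p) :
    HasDerivAt (fun x => F (x, p.2)) (pdx F p) p.1 :=
  (h.comp p.1 (differentiableAt_id.prodMk (differentiableAt_const _))).hasDerivAt

lemma sliceT {E : Type*} [NormedAddCommGroup E] [NormedSpace ℝ E] {F : ℝ × ℝ → E}
    {p : ℝ × ℝ} (h : DifferentiableAt ℝ F p) :
    HasDerivAt (fun t => F (p.1, t)) (pdt F p) p.2 :=
  (h.comp p.2 ((differentiableAt_const _).prodMk differentiableAt_id)).hasDerivAt

lemma invder {K : Type*} [NormedAddCommGroup K] [InnerProductSpace ℂ K] [CompleteSpace K]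
    {f : ℝ → K →L[ℂ] K} {f' : K →L[ℂ] K} {t : ℝ} (h : HasDerivAt f f' t)
    (X Xi : K →L[ℂ] K) (hf : f t = X) (h1 : X ∘L Xi = 1) (h2 : Xi ∘L X = 1) :
    HasDerivAt (fun s => Ring.inverse (f s)) (-(Xi ∘L f' ∘L Xi)) t := by
  set u : (K →L[ℂ] K)ˣ := ⟨X, Xi, by rw [mul_def]; exact h1, by rw [mul_def]; exact h2⟩
  have h0 : HasFDerivAt Ring.inverse (-((mulLeftRight ℝ (K →L[ℂ] K)) ↑u⁻¹) ↑u⁻¹) (f t) := by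
    rw [hf]; exact hasFDerivAt_ringInverse u
  have hfd := h0.comp_hasDerivAt t h
  have heq : (-((mulLeftRight ℝ (K →L[ℂ] K)) ↑u⁻¹) ↑u⁻¹) f' = -(Xi ∘L f' ∘L Xi) := by
    simp [mul_def, u, ← comp_assoc]
  rw [heq] at hfd
  exact hfd

lemma clm_compR {E F G : Type*} [NormedAddCommGroup E] [NormedSpace ℂ E]
    [NormedAddCommGroup F] [NormedSpace ℂ F] [NormedAddCommGroup G] [NormedSpace ℂ G]
    {c : ℝ → F →L[ℂ] G} {c' : F →L[ℂ] G} {d : ℝ → E →L[ℂ] F} {d' : E →L[ℂ] F} {x : ℝ}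
    (hc : HasDerivAt c c' x) (hd : HasDerivAt d d' x) :
    HasDerivAt (fun y => (c y).comp (d y)) (c'.comp (d x) + (c x).comp d') x := by
  have hb := ((isBoundedBilinearMap_comp (𝕜 := ℂ) (E := E) (F := F)
      (G := G)).hasFDerivAt (c x, d x)).restrictScalars ℝ
  have := hb.comp_hasDerivAt x (hc.prodMk hd)
  simp [IsBoundedBilinearMap.deriv_apply, add_comm] at this
  exact this

/-- the evolution equation of the moments. -/
theorem moment_evolution_t {K : Type*} [NormedAddCommGroup K]
    [InnerProductSpace ℂ K] [CompleteSpace K] {d : ℕ} (V : Vessel K d) :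
    ∀ n : ℕ, ∀ p ∈ V.Ω,
      pdtM (V.H n) p =
        Complex.I • pdxM (V.H (n + 1)) p +
          Complex.I • (pdxM (V.H 0) p * V.σ1 * V.H n p) := by
  intro n p hp
  obtain ⟨hX1, hX2⟩ := V.hXinv p hp
  have hp' := V.hΩ.mem_nhds hp
  -- differentiability of the data
  have hdB : DifferentiableAt ℝ V.B p :=
    (V.smoothB.contDiffAt hp').differentiableAt (by norm_num)
  have hdC : DifferentiableAt ℝ V.C p :=
    (V.smoothC.contDiffAt hp').differentiableAt (by norm_num)
  have hdX : DifferentiableAt ℝ V.X p :=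
    (V.smoothX.contDiffAt hp').differentiableAt (by norm_num)
  -- slice derivatives of B, C, X
  have hBx : HasDerivAt (fun x => V.B (x, p.2)) (pdx V.B p) p.1 := sliceX hdB
  have hCx : HasDerivAt (fun x => V.C (x, p.2)) (pdx V.C p) p.1 := sliceX hdC
  have hXx : HasDerivAt (fun x => V.X (x, p.2))
      (V.B p ∘L m2c V.σ2 ∘L V.C p) p.1 := V.eqXx p hp ▸ sliceX hdX
  have hBt : HasDerivAt (fun t => V.B (p.1, t))
      (Complex.I • (V.A ∘L pdx V.B p)) p.2 := V.eqBt p hp ▸ sliceT hdB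
  have hCt : HasDerivAt (fun t => V.C (p.1, t))
      ((-Complex.I) • (pdx V.C p ∘L V.Aζ)) p.2 := V.eqCt p hp ▸ sliceT hdC
  have hXt : HasDerivAt (fun t => V.X (p.1, t))
      (Complex.I • (V.A ∘L V.B p ∘L m2c V.σ2 ∘L V.C p) -
        Complex.I • (V.B p ∘L m2c V.σ2 ∘L V.C p ∘L V.Aζ) +
        Complex.I • (V.B p ∘L m2c V.γ ∘L V.C p)) p.2 := V.eqXt p hp ▸ sliceT hdX
  -- slice derivatives of Xi
  have hXiR : ∀ q ∈ V.Ω, Ring.inverse (V.X q) = V.Xi q := fun q hq =>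
    Ring.inverse_unit (⟨V.X q, V.Xi q, by rw [mul_def]; exact (V.hXinv q hq).1,
      by rw [mul_def]; exact (V.hXinv q hq).2⟩ : (K →L[ℂ] K)ˣ)
  have hnbx : ∀ᶠ x in nhds p.1, (x, p.2) ∈ V.Ω := by
    have hc : ContinuousAt (fun x : ℝ => (x, p.2)) p.1 :=
      (continuous_id.prodMk continuous_const).continuousAt
    exact hc.eventually_mem (V.hΩ.mem_nhds hp)
  have hnbt : ∀ᶠ t in nhds p.2, (p.1, t) ∈ V.Ω := by
    have hc : ContinuousAt (fun t : ℝ => (p.1, t)) p.2 :=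
      (continuous_const.prodMk continuous_id).continuousAt
    exact hc.eventually_mem (V.hΩ.mem_nhds hp)
  have hXix : HasDerivAt (fun x => V.Xi (x, p.2))
      (-(V.Xi p ∘L (V.B p ∘L m2c V.σ2 ∘L V.C p) ∘L V.Xi p)) p.1 :=
    (invder hXx (V.X p) (V.Xi p) rfl hX1 hX2).congr_of_eventuallyEq
      (hnbx.mono fun x hx => (hXiR _ hx).symm)
  have hXit : HasDerivAt (fun t => V.Xi (p.1, t))
      (-(V.Xi p ∘L (Complex.I • (V.A ∘L V.B p ∘L m2c V.σ2 ∘L V.C p) -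
        Complex.I • (V.B p ∘L m2c V.σ2 ∘L V.C p ∘L V.Aζ) +
        Complex.I • (V.B p ∘L m2c V.γ ∘L V.C p)) ∘L V.Xi p)) p.2 :=
    (invder hXt (V.X p) (V.Xi p) rfl hX1 hX2).congr_of_eventuallyEq
      (hnbt.mono fun t ht => (hXiR _ ht).symm)
  -- derivatives of the moment integrands
  have hFx : ∀ m : ℕ, HasDerivAt
      (fun x => V.C (x, p.2) ∘L V.Xi (x, p.2) ∘L (V.A ^ m) ∘L V.B (x, p.2))
      (pdx V.C p ∘L (V.Xi p ∘L (V.A ^ m) ∘L V.B p) +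
        V.C p ∘L ((-(V.Xi p ∘L (V.B p ∘L m2c V.σ2 ∘L V.C p) ∘L V.Xi p)) ∘L
            ((V.A ^ m) ∘L V.B p) +
          V.Xi p ∘L ((0 : K →L[ℂ] K) ∘L V.B p + (V.A ^ m) ∘L pdx V.B p))) p.1 :=
    fun m => clm_compR hCx (clm_compR hXix (clm_compR (hasDerivAt_const p.1 (V.A ^ m)) hBx))
  have hFt : HasDerivAt
      (fun t => V.C (p.1, t) ∘L V.Xi (p.1, t) ∘L (V.A ^ n) ∘L V.B (p.1, t))
      (((-Complex.I) • (pdx V.C p ∘L V.Aζ)) ∘L (V.Xi p ∘L (V.A ^ n) ∘L V.B p) +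
        V.C p ∘L ((-(V.Xi p ∘L (Complex.I • (V.A ∘L V.B p ∘L m2c V.σ2 ∘L V.C p) -
            Complex.I • (V.B p ∘L m2c V.σ2 ∘L V.C p ∘L V.Aζ) +
            Complex.I • (V.B p ∘L m2c V.γ ∘L V.C p)) ∘L V.Xi p)) ∘L
            ((V.A ^ n) ∘L V.B p) +
          V.Xi p ∘L ((0 : K →L[ℂ] K) ∘L V.B p +
            (V.A ^ n) ∘L (Complex.I • (V.A ∘L pdx V.B p))))) p.2 :=
    clm_compR hCt (clm_compR hXit (clm_compR (hasDerivAt_const p.2 (V.A ^ n)) hBt))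
  -- transfer to matrices
  have e1 := pdtM_c2m (F := fun q => V.C q ∘L V.Xi q ∘L (V.A ^ n) ∘L V.B q) hFt
  have e2 := pdxM_c2m (F := fun q => V.C q ∘L V.Xi q ∘L (V.A ^ (n + 1)) ∘L V.B q) (hFx (n + 1))
  have e3 := pdxM_c2m (F := fun q => V.C q ∘L V.Xi q ∘L (V.A ^ 0) ∘L V.B q) (hFx 0)
  have e4 : V.H n p = c2m (V.C p ∘L V.Xi p ∘L (V.A ^ n) ∘L V.B p) := rfl
  show pdtM (fun q => c2m (V.C q ∘L V.Xi q ∘L (V.A ^ n) ∘L V.B q)) p =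
    Complex.I • pdxM (fun q => c2m (V.C q ∘L V.Xi q ∘L (V.A ^ (n + 1)) ∘L V.B q)) p +
      Complex.I • (pdxM (fun q => c2m (V.C q ∘L V.Xi q ∘L (V.A ^ 0) ∘L V.B q)) p *
        V.σ1 * V.H n p)
  rw [e1, e2, e3, e4, ← c2m_m2c (d := d) V.σ1, ← c2m_comp, ← c2m_comp, ← c2m_smul,
    ← c2m_smul, ← c2m_add]
  refine congrArg c2m ?_
  -- the core algebraic identity
  have hone : ∀ (w : Ed d →L[ℂ] K), (1 : K →L[ℂ] K) ∘L w = w := fun w => by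
    rw [one_def, id_comp]
  have R1 : ∀ w : Ed d →L[ℂ] K, V.Aζ ∘L (V.Xi p ∘L w) =
      -(V.Xi p ∘L (V.A ∘L w)) -
        V.Xi p ∘L (V.B p ∘L (m2c V.σ1 ∘L (V.C p ∘L (V.Xi p ∘L w)))) := by
    intro w
    have h9 := congrArg (fun T : K →L[ℂ] K => V.Xi p ∘L T ∘L (V.Xi p ∘L w))
      (V.eqLyap p hp)
    simp only [comp_add, add_comp, comp_assoc, comp_zero, zero_comp] at h9
    rw [show V.X p ∘L (V.Xi p ∘L w) = w from by rw [← comp_assoc, hX1, hone]] at h9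
    rw [show V.Xi p ∘L (V.X p ∘L (V.Aζ ∘L (V.Xi p ∘L w))) =
        V.Aζ ∘L (V.Xi p ∘L w) from by
      rw [← comp_assoc, ← comp_assoc, hX2]
      rw [comp_assoc, hone]] at h9
    have h10 : V.Aζ ∘L (V.Xi p ∘L w) +
        (V.Xi p ∘L (V.A ∘L w) +
          V.Xi p ∘L (V.B p ∘L (m2c V.σ1 ∘L (V.C p ∘L (V.Xi p ∘L w))))) = 0 := by
      rw [← h9]; abel
    have h11 := eq_neg_of_add_eq_zero_left h10
    rw [h11]; abel
  have R2 : ∀ w : K →L[ℂ] Ed d, V.A ∘L (V.B p ∘L (m2c V.σ2 ∘L w)) =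
      -(pdx V.B p ∘L (m2c V.σ1 ∘L w)) - V.B p ∘L (m2c V.γ ∘L w) := by
    intro w
    have h9 := congrArg (fun T : Ed d →L[ℂ] K => T ∘L w) (V.eqBx p hp)
    simp only [comp_add, add_comp, comp_assoc, zero_comp] at h9
    have h10 : V.A ∘L (V.B p ∘L (m2c V.σ2 ∘L w)) +
        (pdx V.B p ∘L (m2c V.σ1 ∘L w) + V.B p ∘L (m2c V.γ ∘L w)) = 0 := by
      rw [← h9]; abel
    have h11 := eq_neg_of_add_eq_zero_left h10
    rw [h11]; abel
  have hpow1 : ∀ w : Ed d →L[ℂ] K, V.A ∘L ((V.A ^ n) ∘L w) = (V.A ^ (n + 1)) ∘L w := by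
    intro w; rw [← comp_assoc, ← mul_def, ← pow_succ']
  have hpow2 : ∀ w : Ed d →L[ℂ] K, (V.A ^ n) ∘L (V.A ∘L w) = (V.A ^ (n + 1)) ∘L w := by
    intro w; rw [← comp_assoc, ← mul_def, ← pow_succ]
  simp only [comp_add, add_comp, comp_sub, sub_comp, comp_neg, neg_comp, comp_smul,
    smul_comp, zero_comp, comp_zero, add_zero, zero_add, comp_assoc, pow_zero, hone,
    R1, R2, hpow1, hpow2]
  module
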